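/- log F(n) = (n/2) · log n · (1 + o(1)); more precisely, log F(n) = (n/2) log n − ((1 + ln 2)/2) · n · (1 + o(1)), where F(n) is the maximum of G(k, ℓ, m) over triples with k + ℓ = n. -/

import Mathlib

/-- `G k l m = k·C(l,m)·C(k-1,l-m)·(l-m)!`. -/
def G (k l m : ℕ) : ℕ := k * l.choose m * (k - 1).choose (l - m) * (l - m).factorial

/-- `F n` is the maximum of `G k l m` over admissible triples with `k + l = n`:
`k ≥ 1`, `m ≤ l`, and `m ≥ l - k + 1` (stated as `l + 1 ≤ m + k`). -/
def F (n : ℕ) : ℕ :=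
  ((Finset.range (n + 1)) ×ˢ (Finset.range (n + 1)) ×ˢ (Finset.range (n + 1))).sup
    fun t => if t.1 + t.2.1 = n ∧ 1 ≤ t.1 ∧ t.2.2 ≤ t.2.1 ∧ t.2.1 + 1 ≤ t.2.2 + t.1
      then G t.1 t.2.1 t.2.2 else 0

open Real Filter Nat Topology

lemma aux_pow_le_fact (n : ℕ) : (n:ℝ)^n ≤ (n ! : ℝ) * Real.exp n := by
  induction n with
  | zero => simp
  | succ n ih =>
    have h1 : ((n:ℝ)+1)^n ≤ (n:ℝ)^n * Real.exp 1 := by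
      rcases Nat.eq_zero_or_pos n with h | h
      · simp [h, Real.one_le_exp]
      · have hn : (0:ℝ) < n := by exact_mod_cast h
        have h2 : (n:ℝ)+1 ≤ n * Real.exp (1/n) := by
          have h3 := Real.add_one_le_exp (1/(n:ℝ))
          have : (n:ℝ) * (1/n + 1) ≤ n * Real.exp (1/n) :=
            mul_le_mul_of_nonneg_left h3 hn.le
          calc (n:ℝ)+1 = n * (1/n + 1) := by field_simp; ring
          _ ≤ _ := this
        calc ((n:ℝ)+1)^n ≤ ((n:ℝ) * Real.exp (1/n))^n :=
              pow_le_pow_left₀ (by positivity) h2 n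
        _ = (n:ℝ)^n * Real.exp 1 := by
            rw [mul_pow, ← Real.exp_nat_mul]
            congr 2
            field_simp
    have key : ((n:ℝ)+1)^(n+1) ≤ ((n+1)! : ℝ) * Real.exp (n+1) := by
      have e1 : ((n:ℝ)+1)^(n+1) = ((n:ℝ)+1) * ((n:ℝ)+1)^n := by ring
      have e2 : ((n+1)! : ℝ) = ((n:ℝ)+1) * (n ! : ℝ) := by
        push_cast [Nat.factorial_succ]; ring
      rw [e1, e2]
      have h5 : ((n:ℝ)+1) * ((n:ℝ)+1)^n ≤ ((n:ℝ)+1) * ((n:ℝ)^n * Real.exp 1) :=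
        mul_le_mul_of_nonneg_left h1 (by positivity)
      refine h5.trans ?_
      have h6 : ((n:ℝ)+1) * ((n:ℝ)^n * Real.exp 1) ≤ ((n:ℝ)+1) * ((n ! : ℝ) * Real.exp n * Real.exp 1) := by
        have := mul_le_mul_of_nonneg_right ih (Real.exp_pos 1).le
        nlinarith [this, Real.exp_pos 1, (by positivity : (0:ℝ) ≤ (n:ℝ)+1)]
      refine h6.trans ?_
      rw [Real.exp_add]
      ring_nf
      exact le_rfl
    push_cast
    push_cast at key
    convert key using 2

lemma aux_fact_le (j : ℕ) (hj : 1 ≤ j) :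
    (j ! : ℝ) * Real.exp j ≤ Real.exp 1 * j * (j:ℝ)^j := by
  induction j with
  | zero => omega
  | succ j ih =>
    rcases Nat.eq_zero_or_pos j with h | h
    · subst h; simp
    · have ihj := ih h
      have hj0 : (0:ℝ) < j := by exact_mod_cast h
      have hexp : Real.exp (1/((j:ℝ)+1)) ≤ ((j:ℝ)+1)/j := by
        set x : ℝ := 1/((j:ℝ)+1) with hxdef
        have hx : (0:ℝ) < (j:ℝ)+1 := by positivity
        have h3 := Real.add_one_le_exp (-x)
        rw [Real.exp_neg] at h3
        have h5 : (1 - x) * Real.exp x ≤ 1 := by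
          calc (1 - x) * Real.exp x ≤ (Real.exp x)⁻¹ * Real.exp x :=
                mul_le_mul_of_nonneg_right (by linarith) (Real.exp_pos x).le
            _ = 1 := inv_mul_cancel₀ (Real.exp_ne_zero x)
        have h6 : 1 - x = (j:ℝ)/((j:ℝ)+1) := by rw [hxdef]; field_simp; ring
        rw [h6] at h5
        rw [le_div_iff₀ hj0]
        have h5b := mul_le_mul_of_nonneg_right h5 hx.le
        have h7 : (j:ℝ)/((j:ℝ)+1) * Real.exp x * ((j:ℝ)+1) = Real.exp x * j := by
          field_simp
        rw [h7] at h5b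
        linarith
      have key : Real.exp 1 * (j:ℝ)^(j+1) ≤ ((j:ℝ)+1)^(j+1) := by
        have h7 : (Real.exp (1/((j:ℝ)+1)))^(j+1) ≤ (((j:ℝ)+1)/j)^(j+1) :=
          pow_le_pow_left₀ (Real.exp_pos _).le hexp (j+1)
        have h8 : (Real.exp (1/((j:ℝ)+1)))^(j+1) = Real.exp 1 := by
          rw [← Real.exp_nat_mul]
          congr 1
          push_cast
          field_simp
        rw [h8, div_pow] at h7
        have h9 : (0:ℝ) < (j:ℝ)^(j+1) := by positivity
        calc Real.exp 1 * (j:ℝ)^(j+1)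
            ≤ ((j:ℝ)+1)^(j+1)/(j:ℝ)^(j+1) * (j:ℝ)^(j+1) :=
              mul_le_mul_of_nonneg_right h7 h9.le
          _ = ((j:ℝ)+1)^(j+1) := div_mul_cancel₀ _ h9.ne'
      have e2 : ((j+1)! : ℝ) = ((j:ℝ)+1) * (j ! : ℝ) := by
        push_cast [Nat.factorial_succ]; ring
      push_cast
      rw [e2]
      calc ((j:ℝ)+1) * (j ! : ℝ) * Real.exp ((j:ℝ)+1)
          = (((j:ℝ)+1) * Real.exp 1) * ((j ! : ℝ) * Real.exp j) := by
            rw [Real.exp_add]; ring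
        _ ≤ (((j:ℝ)+1) * Real.exp 1) * (Real.exp 1 * j * (j:ℝ)^j) := by
            apply mul_le_mul_of_nonneg_left ihj
            positivity
        _ = Real.exp 1 * (Real.exp 1 * (j:ℝ)^(j+1)) * ((j:ℝ)+1) / ((j:ℝ)+1) * ((j:ℝ)+1) := by
            field_simp
            ring
        _ ≤ Real.exp 1 * (((j:ℝ)+1)^(j+1)) * ((j:ℝ)+1) / ((j:ℝ)+1) * ((j:ℝ)+1) := by
            have hx : (0:ℝ) < (j:ℝ)+1 := by positivity
            gcongr
        _ = Real.exp 1 * ((j:ℝ)+1) * ((j:ℝ)+1)^(j+1) := by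
            field_simp

lemma log_fact_lb (n : ℕ) : (n:ℝ) * Real.log n - n ≤ Real.log (n !) := by
  rcases Nat.eq_zero_or_pos n with h | h
  · simp [h]
  have hn : (0:ℝ) < n := by exact_mod_cast h
  have h1 : (0:ℝ) < (n:ℝ)^n := by positivity
  have hf : (0:ℝ) < (n ! : ℝ) := by exact_mod_cast Nat.factorial_pos n
  have h2 := Real.log_le_log h1 (aux_pow_le_fact n)
  rw [Real.log_pow, Real.log_mul hf.ne' (Real.exp_ne_zero _),
    Real.log_exp] at h2
  push_cast at h2 ⊢
  linarith

lemma log_fact_ub (j : ℕ) (hj : 1 ≤ j) :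
    Real.log (j !) ≤ 1 + Real.log j + j * Real.log j - j := by
  have hj0 : (0:ℝ) < j := by exact_mod_cast hj
  have hf : (0:ℝ) < (j ! : ℝ) := by exact_mod_cast Nat.factorial_pos j
  have h1 : (0:ℝ) < (j ! : ℝ) * Real.exp j := by positivity
  have h2 := Real.log_le_log h1 (aux_fact_le j hj)
  rw [Real.log_mul hf.ne' (Real.exp_ne_zero _), Real.log_exp,
    Real.log_mul (by positivity) (by positivity),
    Real.log_mul (Real.exp_ne_zero 1) hj0.ne', Real.log_exp,
    Real.log_pow] at h2
  push_cast at h2 ⊢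
  linarith

lemma choose_mul_choose_le (a b j : ℕ) :
    a.choose j * b.choose j ≤ (a+b).choose (j+j) := by
  rw [Nat.add_choose_eq]
  have := Finset.single_le_sum (f := fun ij : ℕ × ℕ => a.choose ij.1 * b.choose ij.2)
    (s := Finset.HasAntidiagonal.antidiagonal (j+j))
    (fun i _ => Nat.zero_le _) (show (j,j) ∈ Finset.HasAntidiagonal.antidiagonal (j+j) from Finset.HasAntidiagonal.mem_antidiagonal.mpr rfl)
  simpa using this

lemma G_le_nat (n k l m : ℕ) (hkl : k + l = n) (hk : 1 ≤ k) (hm : m ≤ l)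
    (hcon : l + 1 ≤ m + k) :
    G k l m ≤ n * (n.choose ((l-m)+(l-m))) * (l-m)! := by
  set j := l - m with hj
  have h1 : l.choose m = l.choose j := (Nat.choose_symm hm).symm
  have h2 : l.choose j * (k-1).choose j ≤ (l + (k-1)).choose (j+j) :=
    choose_mul_choose_le l (k-1) j
  have h3 : l + (k-1) ≤ n := by omega
  have h4 : (l + (k-1)).choose (j+j) ≤ n.choose (j+j) :=
    Nat.choose_le_choose _ h3
  calc G k l m = k * (l.choose j * (k-1).choose j) * j ! := by
        rw [G, h1]; ring
    _ ≤ n * (n.choose (j+j)) * j ! := by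
        apply Nat.mul_le_mul_right
        apply Nat.mul_le_mul (by omega) (h2.trans h4)

lemma F_lower (n : ℕ) (hn : 2 ≤ n) : n/2 * (n - n/2)! ≤ F n := by
  set l := n/2 with hl
  set k := n - l with hk
  have hl1 : 1 ≤ l := by omega
  have hlk : l ≤ k := by omega
  have hkl : k + l = n := by omega
  -- compute G k l 1
  have hfac : (k-1).choose (l-1) * (l-1)! * ((k-1)-(l-1))! = (k-1)! :=
    Nat.choose_mul_factorial_mul_factorial (by omega)
  have hsub : ((k-1)-(l-1))! = 1 := by
    have : (k-1)-(l-1) = 0 ∨ (k-1)-(l-1) = 1 := by omega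
    rcases this with h | h <;> simp [h]
  rw [hsub, mul_one] at hfac
  have hG : G k l 1 = l * k ! := by
    rw [G, Nat.choose_one_right]
    calc k * l * (k-1).choose (l-1) * (l-1)!
        = k * l * ((k-1).choose (l-1) * (l-1)!) := by ring
      _ = k * l * (k-1)! := by rw [hfac]
      _ = l * (k * (k-1)!) := by ring
      _ = l * k ! := by rw [Nat.mul_factorial_pred (by omega)]
  have hmem : ((k, l, 1) : ℕ × ℕ × ℕ) ∈
      ((Finset.range (n + 1)) ×ˢ (Finset.range (n + 1)) ×ˢ (Finset.range (n + 1))) := by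
    simp only [Finset.mem_product, Finset.mem_range]
    refine ⟨by omega, by omega, by omega⟩
  have hle := Finset.le_sup (f := fun t : ℕ × ℕ × ℕ =>
    if t.1 + t.2.1 = n ∧ 1 ≤ t.1 ∧ t.2.2 ≤ t.2.1 ∧ t.2.1 + 1 ≤ t.2.2 + t.1
      then G t.1 t.2.1 t.2.2 else 0) hmem
  simp only [] at hle
  rw [if_pos (by refine ⟨hkl, by omega, by omega, by omega⟩)] at hle
  rw [hG] at hle
  exact hle

lemma real_key (N T J : ℝ) (hN : N = T + 2*J) (hT1 : 1 ≤ T) (hJ1 : 1 ≤ J) (hN6 : 6 ≤ N) :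
    Real.log N + (T * Real.log N - (T*Real.log T - T)) + (1 + Real.log J + J*Real.log J - J)
      ≤ (N/2) * Real.log N - ((1+Real.log 2)/2)*N
        + (2*Real.log N + 1 + Real.exp 2 * Real.sqrt N * (Real.log N/2 + 2)) := by
  have hNpos : (0:ℝ) < N := by linarith
  have hJpos : (0:ℝ) < J := by linarith
  have hTpos : (0:ℝ) < T := by linarith
  have hlogN0 : 0 ≤ Real.log N := Real.log_nonneg (by linarith)
  have hlogT0 : 0 ≤ Real.log T := Real.log_nonneg hT1
  have hlogJ0 : 0 ≤ Real.log J := Real.log_nonneg hJ1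
  have hJN : Real.log J ≤ Real.log N := Real.log_le_log hJpos (by linarith)
  have h2J : Real.log 2 + Real.log J ≤ Real.log N := by
    have h1 : Real.log (2*J) ≤ Real.log N := Real.log_le_log (by linarith) (by linarith)
    rwa [Real.log_mul two_ne_zero hJpos.ne'] at h1
  have hJterm : 0 ≤ J*(Real.log N - Real.log J - Real.log 2) :=
    mul_nonneg hJpos.le (by linarith)
  have hNlogN : N * Real.log N = T*Real.log N + 2*(J*Real.log N) := by rw [hN]; ring
  have hlog2 : Real.log 2 ≤ 1 := by
    have := Real.log_le_sub_one_of_pos (by norm_num : (0:ℝ) < 2); linarith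
  have hT2 : 0 ≤ (1 - Real.log 2)*T := mul_nonneg (by linarith) hTpos.le
  have hslack0 : 0 ≤ Real.exp 2 * Real.sqrt N * (Real.log N/2 + 2) := by positivity
  rcases le_or_gt T (Real.exp 2 * Real.sqrt N) with hA | hB
  · have hTlogT : 0 ≤ T * Real.log T := mul_nonneg hTpos.le hlogT0
    have hmul : T * Real.log N ≤ (Real.exp 2 * Real.sqrt N) * Real.log N :=
      mul_le_mul_of_nonneg_right hA hlogN0
    nlinarith [hJterm, hmul, hJN, hTlogT, hT2, hNlogN, hA]
  · have hpos : (0:ℝ) < Real.exp 2 * Real.sqrt N := by positivity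
    have hlogT : 2 + Real.log N/2 ≤ Real.log T := by
      have h1 : Real.log (Real.exp 2 * Real.sqrt N) ≤ Real.log T :=
        Real.log_le_log hpos hB.le
      rwa [Real.log_mul (Real.exp_ne_zero 2) (by positivity), Real.log_exp,
        Real.log_sqrt hNpos.le] at h1
    have hmulB : T*(2 + Real.log N/2) ≤ T*Real.log T :=
      mul_le_mul_of_nonneg_left hlogT hTpos.le
    nlinarith [hJterm, hJN, hmulB, hslack0, hT2, hNlogN]

lemma log_G_le (n k l m : ℕ) (hn : 6 ≤ n) (hkl : k + l = n) (hk : 1 ≤ k) (hm : m ≤ l)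
    (hcon : l + 1 ≤ m + k) :
    Real.log (G k l m) ≤ (n/2 : ℝ) * Real.log n - ((1 + Real.log 2)/2) * n
      + (2 * Real.log n + 1 + Real.exp 2 * Real.sqrt n * (Real.log n / 2 + 2)) := by
  set j := l - m with hjdef
  have hjk : j ≤ k - 1 := by omega
  have hjn : j + j ≤ n := by omega
  have hNpos : (0:ℝ) < n := by exact_mod_cast (by omega : 0 < n)
  have hlogN0 : 0 ≤ Real.log n := Real.log_nonneg (by exact_mod_cast (by omega : 1 ≤ n))
  have hslack0 : 0 ≤ Real.exp 2 * Real.sqrt (n:ℝ) * (Real.log n/2 + 2) := by positivity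
  have hGpos : 0 < G k l m := by
    apply Nat.mul_pos
    apply Nat.mul_pos
    apply Nat.mul_pos (by omega)
    · exact Nat.choose_pos hm
    · exact Nat.choose_pos hjk
    · exact Nat.factorial_pos _
  have hmain : Real.log 2 ≤ 1 := by
    have := Real.log_le_sub_one_of_pos (by norm_num : (0:ℝ) < 2); linarith
  have hc2 : (1 + Real.log 2)/2 * (n:ℝ) ≤ (n/2 : ℝ) * Real.log n := by
    -- since log n ≥ log 6 ≥ 1 + log 2
    have h6 : Real.log 6 ≤ Real.log n := by
      apply Real.log_le_log (by norm_num)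
      exact_mod_cast hn
    have h3 : (1:ℝ) ≤ Real.log 3 := by
      rw [Real.le_log_iff_exp_le (by norm_num)]
      have := Real.exp_one_lt_d9
      linarith
    have h63 : Real.log 6 = Real.log 2 + Real.log 3 := by
      rw [← Real.log_mul (by norm_num) (by norm_num)]; norm_num
    nlinarith [hNpos, hlogN0]
  rcases Nat.eq_zero_or_pos j with hj0 | hj1
  · -- j = 0 : G ≤ n
    have hle : G k l m ≤ n := by
      have := G_le_nat n k l m hkl hk hm hcon
      rw [← hjdef, hj0] at this
      simpa using this
    have h1 : Real.log (G k l m) ≤ Real.log n := by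
      apply Real.log_le_log (by exact_mod_cast hGpos)
      exact_mod_cast hle
    nlinarith [h1, hlogN0, hslack0]
  · -- j ≥ 1
    set t := n - (j + j) with htdef
    have ht1 : 1 ≤ t := by omega
    have hNeq : (n:ℝ) = (t:ℝ) + 2*(j:ℝ) := by
      have : t + (j + j) = n := by omega
      push_cast [← this]; ring
    have hchs : n.choose (j+j) = n.choose t := by
      rw [htdef, Nat.choose_symm hjn]
    have hle := G_le_nat n k l m hkl hk hm hcon
    rw [← hjdef, hchs] at hle
    have hcast : Real.log (G k l m) ≤ Real.log ((n:ℝ) * (n.choose t : ℝ) * (j ! : ℝ)) := by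
      apply Real.log_le_log (by exact_mod_cast hGpos)
      exact_mod_cast hle
    have hchpos : (0:ℝ) < (n.choose t : ℝ) := by
      exact_mod_cast Nat.choose_pos (by omega : t ≤ n)
    have hfpos : (0:ℝ) < (j ! : ℝ) := by exact_mod_cast Nat.factorial_pos j
    rw [Real.log_mul (by positivity) hfpos.ne', Real.log_mul hNpos.ne' hchpos.ne'] at hcast
    -- bound log choose
    have hch : Real.log (n.choose t : ℝ) ≤ t * Real.log n - Real.log (t !) := by
      have h1 : (n.choose t : ℝ) ≤ (n:ℝ)^t / (t !) := Nat.choose_le_pow_div t n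
      have h2 := Real.log_le_log hchpos h1
      rwa [Real.log_div (by positivity) (by exact_mod_cast (Nat.factorial_pos t).ne'),
        Real.log_pow] at h2
    have htfac := log_fact_lb t
    have hjfac := log_fact_ub j hj1
    have hkey := real_key (n:ℝ) (t:ℝ) (j:ℝ) hNeq
      (by exact_mod_cast ht1) (by exact_mod_cast hj1) (by exact_mod_cast hn)
    linarith [hcast, hch, htfac, hjfac, hkey]

set_option maxHeartbeats 1000000 in
/-- `log F(n) = (n/2) log n − ((1 + ln 2)/2)·n·(1 + o(1))`. -/
theorem stmt11 :
    Filter.Tendsto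
      (fun n : ℕ =>
        (Real.log (F n) - (n / 2) * Real.log n + ((1 + Real.log 2) / 2) * n) / n)
      Filter.atTop (nhds 0) := by
  have hsq : Tendsto (fun n : ℕ => Real.sqrt n) atTop atTop := by
    apply tendsto_atTop_atTop.2
    intro b
    refine ⟨Nat.ceil (max b 0 ^ 2), fun a ha => ?_⟩
    have h1 : (max b 0)^2 ≤ (a:ℝ) := by
      refine le_trans (Nat.le_ceil _) ?_
      exact_mod_cast ha
    have h2 : max b 0 ≤ Real.sqrt a := by
      have := Real.sqrt_le_sqrt h1
      rwa [Real.sqrt_sq (le_max_right b 0)] at this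
    exact le_trans (le_max_left b 0) h2
  have hlog : Tendsto (fun x : ℝ => Real.log x ^ 1 / (1*x + 0)) atTop (𝓝 0) :=
    Real.tendsto_pow_log_div_mul_add_atTop 1 0 1 one_ne_zero
  have hg : Tendsto (fun n : ℕ => 52 * (Real.log (Real.sqrt n) / Real.sqrt n)) atTop (𝓝 0) := by
    have h := (hlog.comp hsq).const_mul (52:ℝ)
    simp only [Function.comp, pow_one, one_mul, add_zero, mul_zero] at h
    simpa using h
  have hg' : Tendsto (fun n : ℕ => 26 * (Real.log n / Real.sqrt n)) atTop (𝓝 0) := by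
    apply hg.congr'
    filter_upwards [eventually_ge_atTop 1] with n hn
    rw [Real.log_sqrt (by positivity)]
    ring
  apply squeeze_zero_norm' ?_ hg'
  filter_upwards [eventually_ge_atTop 6] with n hn
  set N : ℝ := (n:ℝ) with hNdef
  have hNpos : (0:ℝ) < N := by
    rw [hNdef]; exact_mod_cast (by omega : 0 < n)
  have hN6 : (6:ℝ) ≤ N := by rw [hNdef]; exact_mod_cast hn
  have hL' : (0:ℝ) ≤ Real.log N := Real.log_nonneg (by linarith)
  have hlog1 : 1 ≤ Real.log N := by
    rw [Real.le_log_iff_exp_le hNpos]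
    have := Real.exp_one_lt_d9
    linarith
  have hsq1 : 1 ≤ Real.sqrt N := by
    have := Real.sqrt_le_sqrt (by linarith : (1:ℝ) ≤ N)
    simpa using this
  have hsqpos : 0 < Real.sqrt N := by linarith
  have hexp2 : Real.exp 2 ≤ 8 := by
    have h1 : Real.exp 2 = Real.exp 1 ^ 2 := by
      rw [← Real.exp_nat_mul]; norm_num
    have := Real.exp_one_lt_d9
    have hp : 0 < Real.exp 1 := Real.exp_pos 1
    nlinarith
  -- lower bound on log (F n)
  set k : ℕ := n - n/2 with hkdef
  have hflow := F_lower n (by omega)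
  have hfk : (k)! ≤ F n := by
    calc (k)! ≤ n/2 * (k)! := Nat.le_mul_of_pos_left _ (by omega)
      _ ≤ F n := hflow
  have hFpos : 0 < F n := lt_of_lt_of_le (Nat.factorial_pos k) hfk
  have hlogF_lb : Real.log ((k)!) ≤ Real.log (F n) := by
    apply Real.log_le_log (by exact_mod_cast Nat.factorial_pos k)
    exact_mod_cast hfk
  have hkfac := log_fact_lb k
  have hK2 : N ≤ 2*(k:ℝ) := by
    rw [hNdef]; exact_mod_cast (by omega : n ≤ 2*k)
  have hKn : (k:ℝ) ≤ (N+1)/2 := by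
    have : (2*k : ℕ) ≤ n + 1 := by omega
    have h2 : (2*(k:ℝ)) ≤ N + 1 := by rw [hNdef]; exact_mod_cast this
    linarith
  have hlogk : Real.log (N/2) ≤ Real.log (k:ℝ) :=
    Real.log_le_log (by positivity) (by linarith)
  have hlogN2 : Real.log (N/2) = Real.log N - Real.log 2 := by
    rw [Real.log_div hNpos.ne' two_ne_zero]
  have hlogN2pos : 0 ≤ Real.log (N/2) := Real.log_nonneg (by linarith)
  have hklogk : (N/2) * Real.log (N/2) ≤ (k:ℝ) * Real.log (k:ℝ) := by
    have h1 : (N/2) * Real.log (N/2) ≤ (k:ℝ) * Real.log (N/2) :=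
      mul_le_mul_of_nonneg_right (by linarith) hlogN2pos
    have h2 : (k:ℝ) * Real.log (N/2) ≤ (k:ℝ) * Real.log (k:ℝ) :=
      mul_le_mul_of_nonneg_left hlogk (by positivity)
    linarith
  have hElb : (N/2) * Real.log N - ((1+Real.log 2)/2)*N - 1 ≤ Real.log (F n) := by
    have : (k:ℝ) * Real.log (k:ℝ) - (k:ℝ) ≤ Real.log (F n) := by linarith
    nlinarith [this, hklogk, hKn, hlogN2, hK2]
  -- upper bound on log (F n)
  have hEub : Real.log (F n) ≤ (N/2) * Real.log N - ((1+Real.log 2)/2)*N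
      + (2*Real.log N + 1 + Real.exp 2 * Real.sqrt N * (Real.log N/2 + 2)) := by
    obtain ⟨b, hbmem, hbeq⟩ := Finset.exists_mem_eq_sup
      ((Finset.range (n + 1)) ×ˢ (Finset.range (n + 1)) ×ˢ (Finset.range (n + 1)))
      ⟨(0,0,0), by simp⟩
      (fun t : ℕ × ℕ × ℕ =>
        if t.1 + t.2.1 = n ∧ 1 ≤ t.1 ∧ t.2.2 ≤ t.2.1 ∧ t.2.1 + 1 ≤ t.2.2 + t.1
          then G t.1 t.2.1 t.2.2 else 0)
    have hFb : F n = if b.1 + b.2.1 = n ∧ 1 ≤ b.1 ∧ b.2.2 ≤ b.2.1 ∧ b.2.1 + 1 ≤ b.2.2 + b.1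
        then G b.1 b.2.1 b.2.2 else 0 := by
      rw [F]; exact hbeq
    by_cases hcond : b.1 + b.2.1 = n ∧ 1 ≤ b.1 ∧ b.2.2 ≤ b.2.1 ∧ b.2.1 + 1 ≤ b.2.2 + b.1
    · rw [if_pos hcond] at hFb
      rw [hFb]
      exact log_G_le n b.1 b.2.1 b.2.2 hn hcond.1 hcond.2.1 hcond.2.2.1
        (by omega)
    · rw [if_neg hcond] at hFb
      omega
  -- conclude
  set E : ℝ := Real.log (F n) - (N/2) * Real.log N + ((1+Real.log 2)/2)*N with hEdef
  set slack : ℝ := 2*Real.log N + 1 + Real.exp 2 * Real.sqrt N * (Real.log N/2 + 2)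
    with hslackdef
  clear_value E slack
  have hs1 : 1 ≤ slack := by
    rw [hslackdef]
    have : 0 ≤ Real.exp 2 * Real.sqrt N * (Real.log N/2 + 2) := by positivity
    linarith
  have habs : |E| ≤ slack := by
    rw [abs_le]
    constructor
    · rw [hEdef]; linarith
    · rw [hEdef]; linarith
  have hslack_le : slack ≤ 23 * (Real.sqrt N * Real.log N) := by
    rw [hslackdef]
    nlinarith [mul_nonneg (by linarith : (0:ℝ) ≤ Real.sqrt N - 1) (by linarith : (0:ℝ) ≤ Real.log N - 1),
      mul_nonneg (mul_nonneg (by linarith : (0:ℝ) ≤ 8 - Real.exp 2) hsqpos.le) (by linarith : (0:ℝ) ≤ Real.log N/2 + 2),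
      mul_nonneg (by linarith : (0:ℝ) ≤ Real.sqrt N - 1) hL', Real.exp_pos 2, hsq1, hlog1]
  have hNs : Real.sqrt N * Real.sqrt N = N := Real.mul_self_sqrt hNpos.le
  have hfinal : |E| / N ≤ 26 * (Real.log N / Real.sqrt N) := by
    rw [div_le_iff₀ hNpos]
    calc |E| ≤ slack := habs
      _ ≤ 23 * (Real.sqrt N * Real.log N) := hslack_le
      _ ≤ 26 * (Real.log N / Real.sqrt N) * N := by
          have heq : 26 * (Real.log N / Real.sqrt N) * N = 26 * (Real.sqrt N * Real.log N) := by
            rw [show 26 * (Real.log N / Real.sqrt N) * N = 26 * Real.log N * (N / Real.sqrt N) by ring,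
              Real.div_sqrt]
            ring
          rw [heq]
          nlinarith [mul_nonneg hsqpos.le hL']
  rw [Real.norm_eq_abs, abs_div, abs_of_pos hNpos]
  exact hfinal
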